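/- (Invariance of information flow, Theorem 3.) Let d ≥ 3, let ρ be a probability density on ℝ^d with ρ₁ > 0 almost everywhere, and let F₁, g₁₁ : ℝ^d → ℝ be such that all integrals below exist and are finite. Let φ : ℝ^{d-2} → ℝ^{d-2} be a C¹ diffeomorphism of the coordinates (x₃,…,x_d), set Φ(x₁,x₂,y) = (x₁,x₂,φ(y)), and define the transformed objects ρ̃ = (ρ∘Φ⁻¹)·|det Dφ⁻¹|, F̃₁ = F₁∘Φ⁻¹, g̃₁₁ = g₁₁∘Φ⁻¹. Then the information flow is invariant: −∫_{ℝ^d} ρ̃_{2|1} ∂(F̃₁ρ̃_{∖2})/∂x₁ dx̃ + (1/2)∫_{ℝ^d} ρ̃_{2|1} ∂²(g̃₁₁ρ̃_{∖2})/∂x₁² dx̃ = −∫_{ℝ^d} ρ_{2|1} ∂(F₁ρ_{∖2})/∂x₁ dx + (1/2)∫_{ℝ^d} ρ_{2|1} ∂²(g₁₁ρ_{∖2})/∂x₁² dx, i.e., T̃_{2→1} = T_{2→1}. (Assume in addition that ρ_{∖2} is C² in x₁, that differentiation in x₁ may be interchanged with the integration defining ρ̃_{∖2} from ρ_{∖2},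 and the integrability needed to apply the change of variables y = φ⁻¹(ỹ).) -/

import Mathlib

open MeasureTheory Filter

noncomputable section

lemma det_prodMapAux {M N : Type*} [AddCommGroup M] [Module ℝ M]
    [AddCommGroup N] [Module ℝ N] [FiniteDimensional ℝ M] [FiniteDimensional ℝ N]
    (f : M →ₗ[ℝ] M) (g : N →ₗ[ℝ] N) :
    LinearMap.det (f.prodMap g) = LinearMap.det f * LinearMap.det g := by
  classical
  let b₁ := Module.finBasis ℝ M
  let b₂ := Module.finBasis ℝ N
  rw [← LinearMap.det_toMatrix (b₁.prod b₂), LinearMap.toMatrix_prodMap,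
    Matrix.det_fromBlocks_zero₂₁, LinearMap.det_toMatrix, LinearMap.det_toMatrix]

lemma det_id_prodMapAux {N : Type*} [NormedAddCommGroup N] [NormedSpace ℝ N]
    [FiniteDimensional ℝ N] (A : N →L[ℝ] N) :
    ContinuousLinearMap.det ((ContinuousLinearMap.id ℝ ℝ).prodMap A) = A.det := by
  simp only [ContinuousLinearMap.det, ContinuousLinearMap.coe_prodMap,
    ContinuousLinearMap.coe_id, det_prodMapAux, LinearMap.det_id, one_mul]

lemma covAux {E : Type*} [NormedAddCommGroup E] [NormedSpace ℝ E] [FiniteDimensional ℝ E]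
    [MeasurableSpace E] [BorelSpace E] (μ : Measure E) [μ.IsAddHaarMeasure]
    {f : E → E} {f' : E → E →L[ℝ] E}
    (hf : ∀ x, HasFDerivAt f (f' x) x) (hinj : Function.Injective f)
    (hsurj : Function.Surjective f) (g : E → ℝ) :
    ∫ x, |(f' x).det| • g (f x) ∂μ = ∫ x, g x ∂μ := by
  have h := integral_image_eq_integral_abs_det_fderiv_smul μ MeasurableSet.univ
    (fun x _ => (hf x).hasFDerivWithinAt) hinj.injOn g
  simp only [Set.image_univ, hsurj.range_eq, Measure.restrict_univ] at h
  exact h.symm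

/-- Marginal density of the first coordinate. -/
def rho1 {m : ℕ} (ρ : ℝ × ℝ × (Fin m → ℝ) → ℝ) (x₁ : ℝ) : ℝ :=
  ∫ p : ℝ × (Fin m → ℝ), ρ (x₁, p)

/-- Joint marginal density of the first two coordinates. -/
def rho12 {m : ℕ} (ρ : ℝ × ℝ × (Fin m → ℝ) → ℝ) (x₁ x₂ : ℝ) : ℝ :=
  ∫ y : Fin m → ℝ, ρ (x₁, x₂, y)

/-- Conditional density of the second coordinate given the first. -/
def rho2c {m : ℕ} (ρ : ℝ × ℝ × (Fin m → ℝ) → ℝ) (x₁ x₂ : ℝ) : ℝ :=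
  rho12 ρ x₁ x₂ / rho1 ρ x₁

/-- Marginal density with x₂ integrated out. -/
def rhoM2 {m : ℕ} (ρ : ℝ × ℝ × (Fin m → ℝ) → ℝ) (x₁ : ℝ) (y : Fin m → ℝ) : ℝ :=
  ∫ x₂ : ℝ, ρ (x₁, x₂, y)

/-- The information flow from X₂ to X₁:
T_{2→1} = −∫ ρ_{2|1} ∂(F₁ρ_{∖2})/∂x₁ dx + (1/2)∫ ρ_{2|1} ∂²(g₁₁ρ_{∖2})/∂x₁² dx. -/
def infoFlow {m : ℕ} (ρ F₁ g₁₁ : ℝ × ℝ × (Fin m → ℝ) → ℝ) : ℝ :=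
  -(∫ x : ℝ × ℝ × (Fin m → ℝ),
      rho2c ρ x.1 x.2.1 * deriv (fun t => F₁ (t, x.2.1, x.2.2) * rhoM2 ρ t x.2.2) x.1)
  + (1/2) * ∫ x : ℝ × ℝ × (Fin m → ℝ),
      rho2c ρ x.1 x.2.1
        * deriv (deriv (fun t => g₁₁ (t, x.2.1, x.2.2) * rhoM2 ρ t x.2.2)) x.1

/-- Invariance of information flow, Theorem 3: T_{2→1} is invariant
under an arbitrary C¹ diffeomorphism of the coordinates (x₃,…,x_d). -/
theorem information_flow_invariant
    (m : ℕ) (hm : 1 ≤ m)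
    (ρ F₁ g₁₁ : ℝ × ℝ × (Fin m → ℝ) → ℝ)
    (hρ_meas : Measurable ρ)
    (hρ_nonneg : ∀ x, 0 ≤ ρ x)
    (hρ_int : Integrable ρ)
    (hρ_prob : ∫ x : ℝ × ℝ × (Fin m → ℝ), ρ x = 1)
    (hρ1_pos : ∀ᵐ x₁ : ℝ, 0 < rho1 ρ x₁)
    -- φ is a C¹ diffeomorphism of ℝ^{d-2}
    (φ : (Fin m → ℝ) ≃ (Fin m → ℝ))
    (hφ : ContDiff ℝ 1 ⇑φ)
    (hφinv : ContDiff ℝ 1 ⇑φ.symm)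
    -- the transformed density, drift and diffusion coefficient
    (ρt Ft gt : ℝ × ℝ × (Fin m → ℝ) → ℝ)
    (hρt : ∀ x : ℝ × ℝ × (Fin m → ℝ),
      ρt x = ρ (x.1, x.2.1, φ.symm x.2.2)
              * |ContinuousLinearMap.det (fderiv ℝ (⇑φ.symm) x.2.2)|)
    (hFt : ∀ x : ℝ × ℝ × (Fin m → ℝ), Ft x = F₁ (x.1, x.2.1, φ.symm x.2.2))
    (hgt : ∀ x : ℝ × ℝ × (Fin m → ℝ), gt x = g₁₁ (x.1, x.2.1, φ.symm x.2.2))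
    -- ρ_{∖2} is C² in x₁
    (h_smooth : ∀ y : Fin m → ℝ, ContDiff ℝ 2 (fun t => rhoM2 ρ t y))
    -- differentiation in x₁ may be interchanged with the integration (over x₂)
    -- defining ρ̃_{∖2} from ρ̃
    (h_swap1 : ∀ (x₁ : ℝ) (y : Fin m → ℝ),
      deriv (fun t => rhoM2 ρt t y) x₁ = ∫ x₂ : ℝ, deriv (fun t => ρt (t, x₂, y)) x₁)
    (h_swap2 : ∀ (x₁ : ℝ) (y : Fin m → ℝ),
      deriv (deriv (fun t => rhoM2 ρt t y)) x₁
        = ∫ x₂ : ℝ, deriv (deriv (fun t => ρt (t, x₂, y))) x₁)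
    -- all integrals below exist and are finite (in particular the integrability
    -- needed to apply the change of variables y = φ⁻¹(ỹ))
    (hint1 : Integrable (fun x : ℝ × ℝ × (Fin m → ℝ) =>
      rho2c ρ x.1 x.2.1 * deriv (fun t => F₁ (t, x.2.1, x.2.2) * rhoM2 ρ t x.2.2) x.1))
    (hint2 : Integrable (fun x : ℝ × ℝ × (Fin m → ℝ) =>
      rho2c ρ x.1 x.2.1
        * deriv (deriv (fun t => g₁₁ (t, x.2.1, x.2.2) * rhoM2 ρ t x.2.2)) x.1))
    (hint3 : Integrable (fun x : ℝ × ℝ × (Fin m → ℝ) =>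
      rho2c ρt x.1 x.2.1 * deriv (fun t => Ft (t, x.2.1, x.2.2) * rhoM2 ρt t x.2.2) x.1))
    (hint4 : Integrable (fun x : ℝ × ℝ × (Fin m → ℝ) =>
      rho2c ρt x.1 x.2.1
        * deriv (deriv (fun t => gt (t, x.2.1, x.2.2) * rhoM2 ρt t x.2.2)) x.1)) :
    infoFlow ρt Ft gt = infoFlow ρ F₁ g₁₁ := by
  classical
  haveI iH1 : (volume : Measure (ℝ × (Fin m → ℝ))).IsAddHaarMeasure := by
    rw [Measure.volume_eq_prod]; infer_instance
  haveI iH2 : (volume : Measure (ℝ × ℝ × (Fin m → ℝ))).IsAddHaarMeasure := by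
    rw [Measure.volume_eq_prod]; infer_instance
  have hdφ : ∀ y, HasFDerivAt (⇑φ.symm) (fderiv ℝ (⇑φ.symm) y) y :=
    fun y => (hφinv.differentiable one_ne_zero y).hasFDerivAt
  -- change of variables on the last factor
  have covY : ∀ g : (Fin m → ℝ) → ℝ,
      (∫ y, |(fderiv ℝ (⇑φ.symm) y).det| • g (φ.symm y)) = ∫ y, g y :=
    fun g => covAux volume hdφ φ.symm.injective φ.symm.surjective g
  -- change of variables on ℝ × (last factor)
  have covRY : ∀ g : ℝ × (Fin m → ℝ) → ℝ,
      (∫ p : ℝ × (Fin m → ℝ), |(fderiv ℝ (⇑φ.symm) p.2).det| • g (p.1, φ.symm p.2))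
        = ∫ p, g p := by
    intro g
    have hfd : ∀ p : ℝ × (Fin m → ℝ),
        HasFDerivAt (Prod.map id (⇑φ.symm))
          ((ContinuousLinearMap.id ℝ ℝ).prodMap (fderiv ℝ (⇑φ.symm) p.2)) p :=
      fun p => HasFDerivAt.prodMap p (hasFDerivAt_id p.1) (hdφ p.2)
    have h := covAux volume hfd
      (Function.injective_id.prodMap φ.symm.injective)
      (Function.surjective_id.prodMap φ.symm.surjective) g
    simpa only [det_id_prodMapAux, Prod.map_apply, Prod.map_apply', id_eq] using h
  -- change of variables on the full space
  have covT : ∀ g : ℝ × ℝ × (Fin m → ℝ) → ℝ,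
      (∫ x : ℝ × ℝ × (Fin m → ℝ),
          |(fderiv ℝ (⇑φ.symm) x.2.2).det| • g (x.1, x.2.1, φ.symm x.2.2))
        = ∫ x, g x := by
    intro g
    have hfd : ∀ x : ℝ × ℝ × (Fin m → ℝ),
        HasFDerivAt (Prod.map id (Prod.map id (⇑φ.symm)))
          ((ContinuousLinearMap.id ℝ ℝ).prodMap
            ((ContinuousLinearMap.id ℝ ℝ).prodMap (fderiv ℝ (⇑φ.symm) x.2.2))) x :=
      fun x => HasFDerivAt.prodMap x (hasFDerivAt_id x.1)
        (HasFDerivAt.prodMap x.2 (hasFDerivAt_id x.2.1) (hdφ x.2.2))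
    have h := covAux volume hfd
      (Function.injective_id.prodMap (Function.injective_id.prodMap φ.symm.injective))
      (Function.surjective_id.prodMap (Function.surjective_id.prodMap φ.symm.surjective)) g
    simpa only [det_id_prodMapAux, Prod.map_apply, Prod.map_apply', id_eq] using h
  -- marginals
  have hB : ∀ (x₁ : ℝ) (y : Fin m → ℝ),
      rhoM2 ρt x₁ y = rhoM2 ρ x₁ (φ.symm y) * |(fderiv ℝ (⇑φ.symm) y).det| := by
    intro x₁ y
    simp only [rhoM2, hρt]
    exact integral_mul_const _ _
  have hA : ∀ x₁ x₂ : ℝ, rho12 ρt x₁ x₂ = rho12 ρ x₁ x₂ := by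
    intro x₁ x₂
    simp only [rho12, hρt]
    rw [← covY (fun z => ρ (x₁, x₂, z))]
    congr 1; funext y
    simp [smul_eq_mul, mul_comm]
  have hC : ∀ x₁ : ℝ, rho1 ρt x₁ = rho1 ρ x₁ := by
    intro x₁
    simp only [rho1, hρt]
    rw [← covRY (fun p => ρ (x₁, p))]
    congr 1; funext p
    simp [smul_eq_mul, mul_comm]
  have hD : ∀ x₁ x₂ : ℝ, rho2c ρt x₁ x₂ = rho2c ρ x₁ x₂ := by
    intro x₁ x₂; simp only [rho2c, hA, hC]
  -- derivative identities
  have hderiv1 : ∀ (x₂ : ℝ) (y : Fin m → ℝ) (x₁ : ℝ),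
      deriv (fun t => Ft (t, x₂, y) * rhoM2 ρt t y) x₁
        = deriv (fun t => F₁ (t, x₂, φ.symm y) * rhoM2 ρ t (φ.symm y)) x₁
            * |(fderiv ℝ (⇑φ.symm) y).det| := by
    intro x₂ y x₁
    have hfun : (fun t => Ft (t, x₂, y) * rhoM2 ρt t y)
        = fun t => (F₁ (t, x₂, φ.symm y) * rhoM2 ρ t (φ.symm y))
            * |(fderiv ℝ (⇑φ.symm) y).det| := by
      funext t; rw [hFt (t, x₂, y), hB]; ring
    rw [hfun, deriv_mul_const_field']
  have hderiv2 : ∀ (x₂ : ℝ) (y : Fin m → ℝ) (x₁ : ℝ),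
      deriv (deriv (fun t => gt (t, x₂, y) * rhoM2 ρt t y)) x₁
        = deriv (deriv (fun t => g₁₁ (t, x₂, φ.symm y) * rhoM2 ρ t (φ.symm y))) x₁
            * |(fderiv ℝ (⇑φ.symm) y).det| := by
    intro x₂ y x₁
    have hfun : (fun t => gt (t, x₂, y) * rhoM2 ρt t y)
        = fun t => (g₁₁ (t, x₂, φ.symm y) * rhoM2 ρ t (φ.symm y))
            * |(fderiv ℝ (⇑φ.symm) y).det| := by
      funext t; rw [hgt (t, x₂, y), hB]; ring
    rw [hfun, deriv_mul_const_field', deriv_mul_const_field']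
  -- the two integrals
  have hI1 : (∫ x : ℝ × ℝ × (Fin m → ℝ),
        rho2c ρt x.1 x.2.1 * deriv (fun t => Ft (t, x.2.1, x.2.2) * rhoM2 ρt t x.2.2) x.1)
      = ∫ x : ℝ × ℝ × (Fin m → ℝ),
        rho2c ρ x.1 x.2.1 * deriv (fun t => F₁ (t, x.2.1, x.2.2) * rhoM2 ρ t x.2.2) x.1 := by
    rw [← covT (fun x => rho2c ρ x.1 x.2.1
      * deriv (fun t => F₁ (t, x.2.1, x.2.2) * rhoM2 ρ t x.2.2) x.1)]
    congr 1; funext x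
    rw [hderiv1 x.2.1 x.2.2 x.1, hD x.1 x.2.1]
    simp only [smul_eq_mul]; ring
  have hI2 : (∫ x : ℝ × ℝ × (Fin m → ℝ),
        rho2c ρt x.1 x.2.1
          * deriv (deriv (fun t => gt (t, x.2.1, x.2.2) * rhoM2 ρt t x.2.2)) x.1)
      = ∫ x : ℝ × ℝ × (Fin m → ℝ),
        rho2c ρ x.1 x.2.1
          * deriv (deriv (fun t => g₁₁ (t, x.2.1, x.2.2) * rhoM2 ρ t x.2.2)) x.1 := by
    rw [← covT (fun x => rho2c ρ x.1 x.2.1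
      * deriv (deriv (fun t => g₁₁ (t, x.2.1, x.2.2) * rhoM2 ρ t x.2.2)) x.1)]
    congr 1; funext x
    rw [hderiv2 x.2.1 x.2.2 x.1, hD x.1 x.2.1]
    simp only [smul_eq_mul]; ring
  simp only [infoFlow, hI1, hI2]
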